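/- The cubic polynomial 6930·t³ − 35640·t² − 31680·t − 10560 has exactly one real root, namely C = (2/21)·(18 + (6·(1875 − 7·√4233))^(1/3) + (6·(1875 + 7·√4233))^(1/3)); here 1875 − 7·√4233 > 0, so both cube roots are cube roots of positive real numbers. -/
import Mathlib


/-- The cubic polynomial `6930 t³ − 35640 t² − 31680 t − 10560` has exactly one real root,
namely `C = (2/21)(18 + (6(1875 − 7√4233))^(1/3) + (6(1875 + 7√4233))^(1/3))`;
moreover `1875 − 7√4233 > 0`, so both cube roots are cube roots of positive reals. -/
theorem cubic_unique_real_root :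
    1875 - 7 * Real.sqrt 4233 > 0 ∧
    (∀ t : ℝ, 6930 * t ^ 3 - 35640 * t ^ 2 - 31680 * t - 10560 = 0 ↔
      t = (2 / 21) * (18 + (6 * (1875 - 7 * Real.sqrt 4233)) ^ ((1 : ℝ) / 3) +
        (6 * (1875 + 7 * Real.sqrt 4233)) ^ ((1 : ℝ) / 3))) := by
  set c : ℝ := Real.sqrt 4233 with hc
  have hc0 : 0 ≤ c := Real.sqrt_nonneg _
  have hc2 : c ^ 2 = 4233 := Real.sq_sqrt (by norm_num)
  have hclt : c < 66 := by nlinarith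
  have hpos : 1875 - 7 * c > 0 := by nlinarith
  set u : ℝ := (6 * (1875 - 7 * c)) ^ ((1 : ℝ) / 3) with hu
  set v : ℝ := (6 * (1875 + 7 * c)) ^ ((1 : ℝ) / 3) with hv
  have hx0 : (0 : ℝ) ≤ 6 * (1875 - 7 * c) := by linarith
  have hy0 : (0 : ℝ) ≤ 6 * (1875 + 7 * c) := by nlinarith
  have hu0 : 0 ≤ u := Real.rpow_nonneg hx0 _
  have hv0 : 0 ≤ v := Real.rpow_nonneg hy0 _
  have hu3 : u ^ 3 = 6 * (1875 - 7 * c) := by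
    rw [hu, ← Real.rpow_natCast (_ ^ ((1:ℝ)/3)) 3, ← Real.rpow_mul hx0]
    norm_num
  have hv3 : v ^ 3 = 6 * (1875 + 7 * c) := by
    rw [hv, ← Real.rpow_natCast (_ ^ ((1:ℝ)/3)) 3, ← Real.rpow_mul hy0]
    norm_num
  have huv : u * v = 492 := by
    rw [hu, hv, ← Real.mul_rpow hx0 hy0]
    have hxy : 6 * (1875 - 7 * c) * (6 * (1875 + 7 * c)) = (492 : ℝ) ^ (3 : ℕ) := by
      nlinarith [hc2]
    rw [hxy, ← Real.rpow_natCast (492 : ℝ) 3, ← Real.rpow_mul (by norm_num)]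
    norm_num
  set s : ℝ := u + v with hs
  have hs3 : s ^ 3 = 1476 * s + 22500 := by
    have h : s ^ 3 = u ^ 3 + v ^ 3 + 3 * (u * v) * s := by rw [hs]; ring
    rw [h, hu3, hv3, huv]; ring
  have hs0 : 0 ≤ s := by positivity
  -- s ≥ v > 22.3 since v³ ≥ 11250
  have hv3lb : (11250 : ℝ) ≤ v ^ 3 := by rw [hv3]; nlinarith
  have hslb : (22 : ℝ) < s := by nlinarith [hv3lb, hu0, hv0, sq_nonneg (v - 22), sq_nonneg (v + 22)]
  have hs2 : (1968 : ℝ) < s ^ 2 := by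
    nlinarith [hs3, hslb, sq_nonneg (s - 44.4)]
  refine ⟨hpos, fun t => ?_⟩
  constructor
  · intro h
    set w : ℝ := (21 * t - 36) / 2 with hw
    have hw3 : w ^ 3 = 1476 * w + 22500 := by
      rw [hw]; linear_combination (441 / 2640 : ℝ) * h
    have hfac : (w - s) * (w ^ 2 + s * w + s ^ 2 - 1476) = 0 := by
      linear_combination hw3 - hs3
    have hquad : w ^ 2 + s * w + s ^ 2 - 1476 > 0 := by
      nlinarith [sq_nonneg (2 * w + s), hs2]
    have hws : w = s := by
      rcases mul_eq_zero.mp hfac with h1 | h2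
      · linarith
      · linarith
    have : (21 * t - 36) / 2 = s := by rw [← hw, hws]
    rw [hs] at this
    linarith
  · intro ht
    rw [ht]
    linear_combination (2640 / 441 : ℝ) * hs3
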